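/- Let μ be a probability measure on ℝ with ∫x dμ = 0, ∫x³ dμ = 0 and m₄ = ∫x⁴ dμ < ∞, and write m₂ = ∫x² dμ. If (1+3m₂)(Σ_{j=1}^p b_j)^4 + (m₄+3m₂)(Σ_{j=1}^p a_j)² < 1, then there exist weights γ ∈ (0,∞)^p, ρ ∈ (0,1) and C ≥ 0 such that for every y ∈ ℝ^p and each i ∈ {1,2}: ∫ V_{γ,4}(N_i(y,x)) dμ(x) ≤ ρ·V_{γ,4}(y) + C. -/

import Mathlib

open MeasureTheory

/-- The next lag-vector of the BDAR recursion: first coordinate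
`φ₀ + ∑ⱼ φⱼ yⱼ + x √(α₀ + ∑ⱼ αⱼ yⱼ²)`, remaining coordinates shifted from `y`. -/
noncomputable def nextLag (p : ℕ) (φ0 : ℝ) (φ : Fin p → ℝ) (α0 : ℝ) (α : Fin p → ℝ)
    (y : Fin p → ℝ) (x : ℝ) : Fin p → ℝ :=
  fun k =>
    if _ : (k : ℕ) = 0 then
      φ0 + (∑ j, φ j * y j) + x * Real.sqrt (α0 + ∑ j, α j * y j ^ 2)
    else y ⟨(k : ℕ) - 1, by have := k.isLt; omega⟩

/-- The drift test function `V_{γ,r}(y) = 1 + ∑ₖ γₖ |yₖ|^r`. -/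
noncomputable def testV (p : ℕ) (γ : Fin p → ℝ) (r : ℝ) (y : Fin p → ℝ) : ℝ :=
  1 + ∑ k, γ k * |y k| ^ r

open Finset

lemma abs_rpow_four (a : ℝ) : |a| ^ (4:ℝ) = a ^ 4 := by
  rw [show (4:ℝ) = ((4:ℕ):ℝ) by norm_num, Real.rpow_natCast, ← abs_pow,
    abs_of_nonneg (by positivity)]


lemma cs_step {n : ℕ} (b z : Fin n → ℝ) (hb : ∀ j, 0 ≤ b j) :
    (∑ j, b j * z j) ^ 2 ≤ (∑ j, b j) * ∑ j, b j * z j ^ 2 := by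
  refine Finset.sum_sq_le_sum_mul_sum_of_sq_eq_mul _ (fun i _ => hb i)
    (fun i _ => mul_nonneg (hb i) (sq_nonneg _)) (fun i _ => by ring)

lemma add_pow_le_cases (n : ℕ) {c s t : ℝ} (hc : 0 ≤ c) (hs : 0 ≤ s) (ht : 1 < t) :
    (c + s) ^ n ≤ (t * s) ^ n + (t * c / (t - 1)) ^ n := by
  have ht0 : 0 < t - 1 := by linarith
  rcases le_or_gt c ((t - 1) * s) with h | h
  · have h1 : c + s ≤ t * s := by nlinarith
    have := pow_le_pow_left₀ (by linarith) h1 n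
    have h2 : (0:ℝ) ≤ (t * c / (t-1)) ^ n := by positivity
    linarith
  · have h1 : c + s ≤ t * c / (t - 1) := by
      rw [le_div_iff₀ ht0]; nlinarith
    have := pow_le_pow_left₀ (by linarith) h1 n
    have h2 : (0:ℝ) ≤ (t * s) ^ n := by positivity
    linarith

lemma integrable_pow_le {μ : Measure ℝ} [IsProbabilityMeasure μ]
    (hm4 : Integrable (fun x => x ^ 4) μ) (k : ℕ) (hk : k ≤ 4) :
    Integrable (fun x : ℝ => x ^ k) μ := by
  have h1 : Integrable (fun x : ℝ => 1 + x ^ 4) μ := (integrable_const 1).add hm4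
  refine h1.mono' (by fun_prop) (Filter.Eventually.of_forall fun x => ?_)
  rw [Real.norm_eq_abs, abs_pow]
  rcases le_total |x| 1 with h | h
  · have : |x| ^ k ≤ 1 := pow_le_one₀ (abs_nonneg x) h
    have : (0:ℝ) ≤ x ^ 4 := by positivity
    calc |x| ^ k ≤ 1 := by assumption
      _ ≤ 1 + x ^ 4 := by linarith
  · calc |x| ^ k ≤ |x| ^ 4 := pow_le_pow_right₀ h hk
      _ = x ^ 4 := by rw [← abs_pow, abs_of_nonneg (by positivity)]
      _ ≤ 1 + x ^ 4 := by nlinarith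

lemma integrable_shift_pow4 {μ : Measure ℝ} [IsProbabilityMeasure μ]
    (hm4 : Integrable (fun x => x ^ 4) μ) (m σ : ℝ) :
    Integrable (fun x : ℝ => (m + σ * x) ^ 4) μ := by
  have h : (fun x : ℝ => (m + σ * x) ^ 4) = fun x =>
      m ^ 4 + (4*m^3*σ) * x ^ 1 + (6*m^2*σ^2) * x ^ 2 + (4*m*σ^3) * x ^ 3 + σ^4 * x ^ 4 := by
    funext x; ring
  rw [h]
  exact (((((integrable_const _).add ((integrable_pow_le hm4 1 (by norm_num)).const_mul _)).add
    ((integrable_pow_le hm4 2 (by norm_num)).const_mul _)).add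
    ((integrable_pow_le hm4 3 (by norm_num)).const_mul _)).add
    ((integrable_pow_le hm4 4 (by norm_num)).const_mul _))

lemma integral_shift_pow4 {μ : Measure ℝ} [IsProbabilityMeasure μ]
    (hmean : ∫ x, x ∂μ = 0) (hthird : ∫ x, x ^ 3 ∂μ = 0)
    (hm4 : Integrable (fun x => x ^ 4) μ) (m σ : ℝ) :
    ∫ x, (m + σ * x) ^ 4 ∂μ
      = m ^ 4 + 6 * m ^ 2 * σ ^ 2 * (∫ x, x ^ 2 ∂μ) + σ ^ 4 * ∫ x, x ^ 4 ∂μ := by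
  have h : (fun x : ℝ => (m + σ * x) ^ 4) = fun x =>
      m ^ 4 + (4*m^3*σ) * x ^ 1 + (6*m^2*σ^2) * x ^ 2 + (4*m*σ^3) * x ^ 3 + σ^4 * x ^ 4 := by
    funext x; ring
  have i1 := integrable_pow_le hm4 1 (by norm_num)
  have i2 := integrable_pow_le hm4 2 (by norm_num)
  have i3 := integrable_pow_le hm4 3 (by norm_num)
  rw [h, integral_add, integral_add, integral_add, integral_add, integral_const_mul,
    integral_const_mul, integral_const_mul, integral_const_mul, integral_const]
  · simp only [pow_one] at *
    rw [hmean, hthird]; simp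
  · exact integrable_const _
  · exact i1.const_mul _
  · exact (integrable_const _).add (i1.const_mul _)
  · exact i2.const_mul _
  · exact ((integrable_const _).add (i1.const_mul _)).add (i2.const_mul _)
  · exact i3.const_mul _
  · exact (((integrable_const _).add (i1.const_mul _)).add (i2.const_mul _)).add (i3.const_mul _)
  · exact hm4.const_mul _

lemma testV_four (p : ℕ) (γ : Fin p → ℝ) (y : Fin p → ℝ) :
    testV p γ 4 y = 1 + ∑ k, γ k * y k ^ 4 := by
  simp only [testV, abs_rpow_four]

lemma quartic_small {d : ℝ} (hd0 : 0 < d) (hd3 : d ≤ 1/3) : (1 + d/8)^4 - 1 ≤ d := by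
  nlinarith [mul_nonneg hd0.le hd0.le, mul_nonneg (mul_nonneg hd0.le hd0.le) hd0.le,
    mul_nonneg (mul_nonneg (mul_nonneg hd0.le hd0.le) hd0.le) hd0.le]

lemma t4_small {θ d t : ℝ} (hθ0 : 0 ≤ θ) (hθ1 : θ < 1) (hd0 : 0 < d)
    (h41 : t^4 - 1 ≤ d) : t^4 * θ ≤ θ + d := by
  nlinarith [mul_le_mul_of_nonneg_left h41 hθ0]

lemma moment_small {m s m2 m4v : ℝ} (hm2 : 0 ≤ m2) :
    m^4 + 6*m^2*s*m2 + s^2*m4v ≤ (1+3*m2)*m^4 + (m4v+3*m2)*s^2 := by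
  nlinarith [mul_nonneg hm2 (sq_nonneg (m^2 - s))]

set_option maxHeartbeats 3200000

/-- Drift condition for the BDAR model, case `r = 4`: if `∫x dμ = 0`, `∫x³ dμ = 0`,
`m₄ < ∞` and `(1+3m₂)(∑ⱼ bⱼ)⁴ + (m₄+3m₂)(∑ⱼ aⱼ)² < 1`, then there are weights `γ`,
`ρ ∈ (0,1)` and `C ≥ 0` with
`∫ V_{γ,4}(N_i(y,x)) dμ(x) ≤ ρ V_{γ,4}(y) + C` for all `y` and both regimes. -/
theorem bdar_drift_condition_fourth (p : ℕ) (hp : 1 ≤ p)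
    (φ0 : Fin 2 → ℝ) (φ : Fin 2 → Fin p → ℝ)
    (α0 : Fin 2 → ℝ) (α : Fin 2 → Fin p → ℝ)
    (hα0 : ∀ i, 0 < α0 i) (hα : ∀ i j, 0 ≤ α i j)
    (μ : Measure ℝ) [IsProbabilityMeasure μ]
    (hmean : ∫ x, x ∂μ = 0) (hthird : ∫ x, x ^ 3 ∂μ = 0)
    (hm4 : Integrable (fun x => x ^ 4) μ)
    (hcond : (1 + 3 * ∫ x, x ^ 2 ∂μ) * (∑ j, max |φ 0 j| |φ 1 j|) ^ 4
        + ((∫ x, x ^ 4 ∂μ) + 3 * ∫ x, x ^ 2 ∂μ) * (∑ j, max (α 0 j) (α 1 j)) ^ 2 < 1) :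
    ∃ γ : Fin p → ℝ, (∀ k, 0 < γ k) ∧
      ∃ ρ : ℝ, ρ ∈ Set.Ioo (0 : ℝ) 1 ∧ ∃ C : ℝ, 0 ≤ C ∧
        ∀ y : Fin p → ℝ, ∀ i : Fin 2,
          ∫ x, testV p γ 4 (nextLag p (φ0 i) (φ i) (α0 i) (α i) y x) ∂μ
            ≤ ρ * testV p γ 4 y + C := by
  obtain ⟨q, rfl⟩ : ∃ q, p = q + 1 := ⟨p - 1, by omega⟩
  set m2 := ∫ x, x ^ 2 ∂μ with hm2def
  set m4v := ∫ x, x ^ 4 ∂μ with hm4def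
  have hm2 : 0 ≤ m2 := integral_nonneg fun x => by positivity
  have hm4nn : 0 ≤ m4v := integral_nonneg fun x => by positivity
  set b : Fin (q+1) → ℝ := fun j => max |φ 0 j| |φ 1 j| with hbdef
  set a : Fin (q+1) → ℝ := fun j => max (α 0 j) (α 1 j) with hadef
  have hb : ∀ j, 0 ≤ b j := fun j => le_trans (abs_nonneg _) (le_max_left _ _)
  have ha : ∀ j, 0 ≤ a j := fun j => le_trans (hα 0 j) (le_max_left _ _)
  set B := ∑ j, b j with hBdef
  set A := ∑ j, a j with hAdef
  have hB : 0 ≤ B := Finset.sum_nonneg fun j _ => hb j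
  have hA : 0 ≤ A := Finset.sum_nonneg fun j _ => ha j
  set K1 := 1 + 3 * m2 with hK1def
  have hK1p : 0 < K1 := by simp only [hK1def]; linarith
  set K2 := m4v + 3 * m2 with hK2def
  have hK2 : 0 ≤ K2 := by simp only [hK2def]; linarith
  set u : Fin (q+1) → ℝ := fun j => K1 * B^3 * b j + K2 * A * a j with hudef
  have hu : ∀ j, 0 ≤ u j := fun j => add_nonneg
    (mul_nonneg (mul_nonneg hK1p.le (by positivity)) (hb j))
    (mul_nonneg (mul_nonneg hK2 hA) (ha j))
  set θ := ∑ j, u j with hθdef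
  have hθeq : θ = K1 * B^4 + K2 * A^2 := by
    simp only [hθdef, hudef, Finset.sum_add_distrib, ← Finset.mul_sum, ← hBdef, ← hAdef]
    ring
  have hθ1 : θ < 1 := by rw [hθeq]; exact hcond
  have hθ0 : 0 ≤ θ := Finset.sum_nonneg fun j _ => hu j
  clear_value θ
  set d := (1 - θ)/3 with hddef
  have hd0 : 0 < d := by simp only [hddef]; linarith
  have hd3 : d ≤ 1/3 := by simp only [hddef]; linarith
  clear_value d
  set t := 1 + d/8 with htdef
  have ht1 : 1 < t := by simp only [htdef]; linarith
  have ht4 : t^4 * θ ≤ θ + d := by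
    have h41 : t^4 - 1 ≤ d := by
      simp only [htdef]; exact quartic_small hd0 hd3
    exact t4_small hθ0 hθ1 hd0 h41
  clear_value t
  have hq1 : (0:ℝ) < (q:ℝ)+1 := by positivity
  set δ := d/((q:ℝ)+1) with hδdef
  have hδ0 : 0 < δ := by positivity
  clear_value δ
  set ut : Fin (q+1) → ℝ := fun j => t^4 * u j + δ with hutdef
  have hutpos : ∀ j, 0 < ut j := fun j =>
    add_pos_of_nonneg_of_pos (mul_nonneg (by positivity) (hu j)) hδ0
  set θ' := ∑ j, ut j with hθ'def
  have hθ'eq : θ' = t^4*θ + d := by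
    simp only [hθ'def, hutdef, Finset.sum_add_distrib, ← Finset.mul_sum, ← hθdef,
      Finset.sum_const, Finset.card_univ, Fintype.card_fin, nsmul_eq_mul, hδdef]
    push_cast
    field_simp
  have hθ'1 : θ' < 1 := by rw [hθ'eq]; linarith
  have hθ'0 : 0 < θ' := by
    rw [hθ'eq]
    have : 0 ≤ t^4 * θ := mul_nonneg (by positivity) hθ0
    linarith
  clear_value θ'
  set ρ := 1 - (1 - θ')/((q:ℝ)+1) with hρdef
  clear_value ρ
  have hρ1 : ρ < 1 := by
    have : 0 < (1-θ')/((q:ℝ)+1) := div_pos (by linarith) hq1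
    simp only [hρdef]; linarith
  have hρ0 : 0 < ρ := by
    have h1 : (1-θ')/((q:ℝ)+1) < 1 := by rw [div_lt_one hq1]; linarith
    simp only [hρdef]; linarith
  have hρpow : θ' ≤ ρ^(q+1) := by
    have hb2 : (-2:ℝ) ≤ -((1-θ')/((q:ℝ)+1)) := by
      have h1 : (1-θ')/((q:ℝ)+1) ≤ 1 := by rw [div_le_one hq1]; linarith
      linarith
    have hber := one_add_mul_le_pow hb2 (q+1)
    have hkeyeq : (1:ℝ) + (↑(q+1):ℝ) * (-((1-θ')/((q:ℝ)+1))) = θ' := by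
      push_cast; field_simp; ring
    rw [hkeyeq] at hber
    calc θ' ≤ (1 + -((1-θ')/((q:ℝ)+1)))^(q+1) := hber
      _ = ρ^(q+1) := by rw [hρdef]; ring_nf
  -- the weight sequence
  set w : ℕ → ℝ := fun k => if h : k < q+1 then ut ⟨k, h⟩ else 0 with hwdef
  have hw0 : ∀ k, 0 ≤ w k := by
    intro k; simp only [hwdef]; split
    · exact (hutpos _).le
    · exact le_refl 0
  have hwpos : ∀ k, k ≤ q → 0 < w k := by
    intro k hk; simp only [hwdef]; rw [dif_pos (by omega)]; exact hutpos _
  set g : ℕ → ℝ := fun j => ∑ k ∈ Finset.Icc j q, w k * ρ⁻¹ ^ (k+1-j) with hgdef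
  have hρinvpos : 0 < ρ⁻¹ := by positivity
  have hgnn : ∀ j, 0 ≤ g j := by
    intro j; simp only [hgdef]
    exact Finset.sum_nonneg fun k _ => mul_nonneg (hw0 k) (by positivity)
  have hgpos : ∀ j, j ≤ q → 0 < g j := by
    intro j hj; simp only [hgdef]
    apply Finset.sum_pos
    · intro k hk
      simp only [Finset.mem_Icc] at hk
      exact mul_pos (hwpos k hk.2) (by positivity)
    · exact ⟨j, by simp [Finset.mem_Icc, hj]⟩
  have hgq1 : g (q+1) = 0 := by
    simp only [hgdef]
    rw [Finset.Icc_eq_empty (by omega)]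
    simp
  have hρne : ρ ≠ 0 := ne_of_gt hρ0
  have hkey : ∀ j, j ≤ q → ρ * g j = w j + g (j+1) := by
    intro j hj
    simp only [hgdef]
    rw [Finset.mul_sum]
    have hsplit : Finset.Icc j q = insert j (Finset.Icc (j+1) q) := by
      ext k; simp only [Finset.mem_Icc, Finset.mem_insert]; omega
    rw [hsplit, Finset.sum_insert (by simp only [Finset.mem_Icc]; omega)]
    have h1 : ρ * (w j * ρ⁻¹ ^ (j+1-j)) = w j := by
      rw [show j+1-j = 1 by omega, pow_one]
      field_simp
    rw [h1]
    congr 1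
    apply Finset.sum_congr rfl
    intro k hk
    simp only [Finset.mem_Icc] at hk
    rw [show k+1-j = (k+1-(j+1)) + 1 by omega, pow_succ]
    field_simp
  have hg0le : g 0 ≤ 1 := by
    have hρinv1 : 1 ≤ ρ⁻¹ := one_le_inv_iff₀.mpr ⟨hρ0, hρ1.le⟩
    have hsum0 : ∑ k ∈ Finset.Icc 0 q, w k = θ' := by
      have h1 : Finset.Icc 0 q = Finset.range (q+1) := by
        ext k; simp [Finset.mem_Icc, Finset.mem_range]
      rw [h1, ← Fin.sum_univ_eq_sum_range]
      rw [hθ'def]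
      apply Finset.sum_congr rfl
      intro k _
      simp only [hwdef]
      rw [dif_pos k.isLt]
    have hstep : g 0 ≤ θ' * ρ⁻¹^(q+1) := by
      simp only [hgdef]
      calc ∑ k ∈ Finset.Icc 0 q, w k * ρ⁻¹ ^ (k+1-0)
          ≤ ∑ k ∈ Finset.Icc 0 q, w k * ρ⁻¹ ^ (q+1) := by
            apply Finset.sum_le_sum
            intro k hk
            simp only [Finset.mem_Icc] at hk
            exact mul_le_mul_of_nonneg_left
              (pow_le_pow_right₀ hρinv1 (by omega)) (hw0 k)
        _ = θ' * ρ⁻¹^(q+1) := by rw [← Finset.sum_mul, hsum0]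
    have hv : 0 < ρ^(q+1) := by positivity
    calc g 0 ≤ θ' * ρ⁻¹^(q+1) := hstep
      _ ≤ ρ^(q+1) * ρ⁻¹^(q+1) := mul_le_mul_of_nonneg_right hρpow (by positivity)
      _ = 1 := by rw [← mul_pow, mul_inv_cancel₀ hρne, one_pow]
  -- constants
  set c0 := max |φ0 0| |φ0 1| with hc0def
  have hc0 : 0 ≤ c0 := le_trans (abs_nonneg _) (le_max_left _ _)
  set e0 := max (α0 0) (α0 1) with he0def
  have he0 : 0 ≤ e0 := le_trans (hα0 0).le (le_max_left _ _)
  set D1 := (t*c0/(t-1))^4 with hD1def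
  set D2 := (t*e0/(t-1))^2 with hD2def
  have hD1 : 0 ≤ D1 := by simp only [hD1def]; positivity
  have hD2 : 0 ≤ D2 := by simp only [hD2def]; positivity
  set C0 := K1 * D1 + K2 * D2 with hC0def
  have hC0 : 0 ≤ C0 := by
    simp only [hC0def]
    exact add_nonneg (mul_nonneg hK1p.le hD1) (mul_nonneg hK2 hD2)
  clear_value c0 e0 D1 D2 C0
  refine ⟨fun j => g j, fun k => hgpos k (Nat.lt_succ_iff.mp k.isLt), ρ, ⟨hρ0, hρ1⟩,
    1 - ρ + g 0 * C0, by linarith [mul_nonneg (hgnn 0) hC0], ?_⟩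
  intro y i
  -- regime bounds
  have hφi : ∀ j, |φ i j| ≤ b j := by
    intro j; fin_cases i
    · exact le_max_left _ _
    · exact le_max_right _ _
  have hαi : ∀ j, α i j ≤ a j := by
    intro j; fin_cases i
    · exact le_max_left _ _
    · exact le_max_right _ _
  have hφ0i : |φ0 i| ≤ c0 := by
    rw [hc0def]; fin_cases i
    · exact le_max_left _ _
    · exact le_max_right _ _
  have hα0i : α0 i ≤ e0 := by
    rw [he0def]; fin_cases i
    · exact le_max_left _ _
    · exact le_max_right _ _
  set m := φ0 i + ∑ j, φ i j * y j with hmdef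
  set s := α0 i + ∑ j, α i j * y j ^ 2 with hsdef
  have hs0 : 0 ≤ s := by
    rw [hsdef]
    exact add_nonneg (hα0 i).le
      (Finset.sum_nonneg fun j _ => mul_nonneg (hα i j) (sq_nonneg _))
  set S := ∑ j, b j * |y j| with hSdef
  have hS0 : 0 ≤ S := Finset.sum_nonneg fun j _ => mul_nonneg (hb j) (abs_nonneg _)
  set T := ∑ j, a j * y j ^ 2 with hTdef
  have hT0 : 0 ≤ T := Finset.sum_nonneg fun j _ => mul_nonneg (ha j) (sq_nonneg _)
  set Wb := ∑ j, b j * y j ^ 4 with hWbdef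
  set Wa := ∑ j, a j * y j ^ 4 with hWadef
  have hWb0 : 0 ≤ Wb := Finset.sum_nonneg fun j _ => mul_nonneg (hb j) (by positivity)
  have hWa0 : 0 ≤ Wa := Finset.sum_nonneg fun j _ => mul_nonneg (ha j) (by positivity)
  -- integrand rewrite
  have hco0 : ∀ x : ℝ, nextLag (q+1) (φ0 i) (φ i) (α0 i) (α i) y x 0
      = m + Real.sqrt s * x := by
    intro x
    have h0 : nextLag (q+1) (φ0 i) (φ i) (α0 i) (α i) y x 0
        = φ0 i + (∑ j, φ i j * y j) + x * Real.sqrt (α0 i + ∑ j, α i j * y j ^ 2) := by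
      simp [nextLag]
    rw [h0, hmdef, hsdef]
    ring
  have hcos : ∀ (x : ℝ) (k : Fin q),
      nextLag (q+1) (φ0 i) (φ i) (α0 i) (α i) y x k.succ = y k.castSucc := by
    intro x k
    simp only [nextLag, Fin.val_succ]
    rw [dif_neg (Nat.succ_ne_zero _)]
    exact congrArg y (Fin.ext (by simp))
  have hfun : (fun x => testV (q+1) (fun j : Fin (q+1) => g ↑j) 4
        (nextLag (q+1) (φ0 i) (φ i) (α0 i) (α i) y x))
      = fun x => (1 + ∑ k : Fin q, g ((k:ℕ)+1) * y k.castSucc ^ 4)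
          + g 0 * (m + Real.sqrt s * x) ^ 4 := by
    funext x
    rw [testV_four, Fin.sum_univ_succ, hco0 x]
    simp only [hcos x, Fin.val_succ, Fin.val_zero]
    ring
  have hZint := integrable_shift_pow4 hm4 m (Real.sqrt s)
  -- bound on ∫ Z^4
  have hσ2 : Real.sqrt s ^ 2 = s := Real.sq_sqrt hs0
  have hσ4 : Real.sqrt s ^ 4 = s ^ 2 := by rw [show (4:ℕ) = 2*2 from rfl, pow_mul, hσ2]
  have hmabs : |m| ≤ c0 + S := by
    rw [hmdef]
    calc |φ0 i + ∑ j, φ i j * y j| ≤ |φ0 i| + |∑ j, φ i j * y j| := abs_add_le _ _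
      _ ≤ c0 + ∑ j, |φ i j * y j| := add_le_add hφ0i (Finset.abs_sum_le_sum_abs _ _)
      _ ≤ c0 + S := by
          rw [hSdef]
          refine add_le_add le_rfl (Finset.sum_le_sum fun j _ => ?_)
          rw [abs_mul]
          exact mul_le_mul_of_nonneg_right (hφi j) (abs_nonneg _)
  have hm4b : m^4 ≤ (c0 + S)^4 := by
    calc m^4 = |m|^4 := by rw [← abs_pow, abs_of_nonneg (by positivity)]
      _ ≤ (c0+S)^4 := pow_le_pow_left₀ (abs_nonneg m) hmabs 4
  have hsb : s ≤ e0 + T := by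
    rw [hsdef, hTdef]
    exact add_le_add hα0i (Finset.sum_le_sum fun j _ =>
      mul_le_mul_of_nonneg_right (hαi j) (sq_nonneg _))
  have hs2b : s^2 ≤ (e0+T)^2 := pow_le_pow_left₀ hs0 hsb 2
  set Q := ∑ j, b j * y j ^ 2 with hQdef
  have hQ0 : 0 ≤ Q := Finset.sum_nonneg fun j _ => mul_nonneg (hb j) (sq_nonneg _)
  have hCS1 : S^2 ≤ B * Q := by
    have h := cs_step b (fun j => |y j|) hb
    simp only [sq_abs] at h
    rw [← hSdef, ← hBdef, ← hQdef] at h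
    exact h
  have hCS2 : Q^2 ≤ B * Wb := by
    have h := cs_step b (fun j => y j ^ 2) hb
    have h2 : ∑ j, b j * (y j ^ 2) ^ 2 = Wb := by
      rw [hWbdef]; exact Finset.sum_congr rfl fun j _ => by ring
    rw [h2, ← hQdef, ← hBdef] at h
    exact h
  have hCS3 : T^2 ≤ A * Wa := by
    have h := cs_step a (fun j => y j ^ 2) ha
    have h2 : ∑ j, a j * (y j ^ 2) ^ 2 = Wa := by
      rw [hWadef]; exact Finset.sum_congr rfl fun j _ => by ring
    rw [h2, ← hTdef, ← hAdef] at h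
    exact h
  have hS4 : S^4 ≤ B^3 * Wb := by
    calc S^4 = (S^2)^2 := by ring
      _ ≤ (B*Q)^2 := pow_le_pow_left₀ (sq_nonneg S) hCS1 2
      _ = B^2 * Q^2 := by ring
      _ ≤ B^2 * (B * Wb) := mul_le_mul_of_nonneg_left hCS2 (by positivity)
      _ = B^3 * Wb := by ring
  have hP1 := add_pow_le_cases 4 hc0 hS0 ht1
  have hP2 := add_pow_le_cases 2 he0 hT0 ht1
  rw [← hD1def] at hP1
  rw [← hD2def] at hP2
  have ht2 : t^2 ≤ t^4 := pow_le_pow_right₀ ht1.le (by norm_num)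
  have hid : ∑ j, u j * y j ^ 4 = K1*B^3*Wb + K2*A*Wa := by
    simp only [hudef, hWbdef, hWadef, Finset.mul_sum]
    rw [← Finset.sum_add_distrib]
    exact Finset.sum_congr rfl fun j _ => by ring
  have hZ : ∫ x, (m + Real.sqrt s * x)^4 ∂μ ≤ t^4 * (∑ j, u j * y j ^ 4) + C0 := by
    rw [integral_shift_pow4 hmean hthird hm4, ← hm2def, ← hm4def, hσ2, hσ4, hid, hC0def]
    have step1 : m^4 + 6*m^2*s*m2 + s^2*m4v ≤ K1*m^4 + K2*s^2 := by
      rw [hK1def, hK2def]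
      exact moment_small hm2
    have step2 : K1*m^4 ≤ K1*((t*S)^4 + D1) :=
      mul_le_mul_of_nonneg_left (le_trans hm4b hP1) hK1p.le
    have step3 : K2*s^2 ≤ K2*((t*T)^2 + D2) :=
      mul_le_mul_of_nonneg_left (le_trans hs2b hP2) hK2
    have step4 : K1*(t*S)^4 ≤ K1*(t^4*(B^3*Wb)) := by
      refine mul_le_mul_of_nonneg_left ?_ hK1p.le
      calc (t*S)^4 = t^4*S^4 := by ring
        _ ≤ t^4*(B^3*Wb) := mul_le_mul_of_nonneg_left hS4 (by positivity)
    have step5 : K2*(t*T)^2 ≤ K2*(t^4*(A*Wa)) := by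
      refine mul_le_mul_of_nonneg_left ?_ hK2
      have h1 : t^2*T^2 ≤ t^4*T^2 := mul_le_mul_of_nonneg_right ht2 (sq_nonneg T)
      have h2 : t^4*T^2 ≤ t^4*(A*Wa) := mul_le_mul_of_nonneg_left hCS3 (by positivity)
      calc (t*T)^2 = t^2*T^2 := by ring
        _ ≤ t^4*T^2 := h1
        _ ≤ t^4*(A*Wa) := h2
    linarith [step1, step2, step3, step4, step5]
  -- key sum inequality
  have hsum : (∑ k : Fin q, g ((k:ℕ)+1) * y k.castSucc ^ 4)
        + g 0 * (t^4 * ∑ j, u j * y j ^ 4)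
      ≤ ρ * ∑ j : Fin (q+1), g ↑j * y j ^ 4 := by
    have hshift : ∑ j : Fin (q+1), g ((j:ℕ)+1) * y j ^ 4
        = ∑ k : Fin q, g ((k:ℕ)+1) * y k.castSucc ^ 4 := by
      rw [Fin.sum_univ_castSucc (f := fun j : Fin (q+1) => g ((j:ℕ)+1) * y j ^ 4)]
      simp [hgq1]
    have hexp : g 0 * (t^4 * ∑ j, u j * y j ^ 4)
        = ∑ j : Fin (q+1), (g 0 * (t^4 * u j)) * y j ^ 4 := by
      rw [Finset.mul_sum, Finset.mul_sum]
      exact Finset.sum_congr rfl fun j _ => by ring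
    rw [← hshift, hexp, ← Finset.sum_add_distrib, Finset.mul_sum]
    refine Finset.sum_le_sum fun j _ => ?_
    have hj : (j:ℕ) ≤ q := Nat.lt_succ_iff.mp j.isLt
    have hwj : w (j:ℕ) = ut j := by
      simp only [hwdef]; rw [dif_pos j.isLt]
    have hkj := hkey j hj
    have h5 : g 0 * (t^4 * u j) ≤ t^4 * u j :=
      mul_le_of_le_one_left (mul_nonneg (by positivity) (hu j)) hg0le
    have hcj : g ((j:ℕ)+1) + g 0 * (t^4 * u j) ≤ ρ * g ↑j := by
      rw [hkj, hwj, hutdef]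
      dsimp only
      linarith [hδ0]
    have hy4 : (0:ℝ) ≤ y j ^ 4 := by positivity
    calc g ((j:ℕ)+1) * y j ^ 4 + g 0 * (t^4 * u j) * y j ^ 4
        = (g ((j:ℕ)+1) + g 0 * (t^4 * u j)) * y j ^ 4 := by ring
      _ ≤ (ρ * g ↑j) * y j ^ 4 := mul_le_mul_of_nonneg_right hcj hy4
      _ = ρ * (g ↑j * y j ^ 4) := by ring
  -- conclude
  rw [hfun, integral_add (integrable_const _) (hZint.const_mul _), integral_const,
    integral_const_mul, testV_four]
  simp only [measure_univ, probReal_univ, ENNReal.toReal_one, one_smul]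
  have hfinal := mul_le_mul_of_nonneg_left hZ (hgnn 0)
  have hexp2 : g 0 * (t^4 * (∑ j, u j * y j ^ 4) + C0)
      = g 0 * (t^4 * ∑ j, u j * y j ^ 4) + g 0 * C0 := by ring
  rw [hexp2] at hfinal
  rw [mul_add, mul_one]
  linarith [hsum, hfinal]
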